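/- Let 1/2 < μ ≤ 1 and let n ≥ 3 be an integer. If h_μ(μ) < 2·(1 − 2^{n−2}/(2^{n−1}−1)), then the tent map T_μ avoids the pattern σ_n = (n−1) n 1 2 3 ⋯ (n−2); that is, σ_n ∉ Allow(T_μ). -/

import Mathlib

open Set

/-- The symmetric tent map of height `μ`:
`T_μ(x) = 2μx` for `x ≤ 1/2` and `T_μ(x) = 2μ(1-x)` for `x > 1/2`. -/
noncomputable def tentMap (μ : ℝ) (x : ℝ) : ℝ :=
  if x ≤ 1/2 then 2*μ*x else 2*μ*(1-x)

/-- `h : [0,1] → [0,1]` satisfies the commuter functional equation for `T_μ`: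
`h(x) = (1/2)·h(2μx)` for `0 ≤ x ≤ 1/2` and `h(x) = 1 - (1/2)·h(2μ(1-x))` for `1/2 < x ≤ 1`. -/
def IsCommuter (μ : ℝ) (h : ℝ → ℝ) : Prop :=
  (∀ x ∈ Icc (0:ℝ) 1, h x ∈ Icc (0:ℝ) 1) ∧
  (∀ x : ℝ, 0 ≤ x → x ≤ 1/2 → h x = (1/2) * h (2*μ*x)) ∧
  (∀ x : ℝ, 1/2 < x → x ≤ 1 → h x = 1 - (1/2) * h (2*μ*(1-x)))

/-- `Allows f p` means the permutation `p` of `{0, …, n-1}` is an allowed pattern of the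
map `f` on `[0,1]`: there is `x ∈ [0,1]` whose orbit `x, f(x), …, f^[n-1](x)` is in the
same relative order as `p 0, p 1, …, p (n-1)`. -/
def Allows (f : ℝ → ℝ) {n : ℕ} (p : Equiv.Perm (Fin n)) : Prop :=
  ∃ x ∈ Icc (0:ℝ) 1, ∀ i j : Fin n, p i < p j ↔ f^[(i:ℕ)] x < f^[(j:ℕ)] x

/-- The permutation σ_n = (n-1) n 1 2 ⋯ (n-2) (one-line notation, 1-indexed), i.e. in
0-indexed terms the map `i ↦ i + (n-2) (mod n)` on `Fin n`. -/
def sigmaPerm (n : ℕ) : Equiv.Perm (Fin n) := finRotate n ^ (n - 2)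

open Fin.NatCast

private lemma tentMap_mem {μ : ℝ} (hμ0 : 0 < μ) {x : ℝ}
    (hx : x ∈ Icc (0:ℝ) 1) : tentMap μ x ∈ Icc (0:ℝ) μ := by
  obtain ⟨h0, h1⟩ := hx
  unfold tentMap
  split <;> constructor <;> nlinarith

private lemma commuter_mono_aux {μ : ℝ} (hμ1 : 1/2 < μ) (hμ2 : μ ≤ 1) {h : ℝ → ℝ}
    (hc : IsCommuter μ h) :
    ∀ k : ℕ, ∀ u v : ℝ, u ∈ Icc (0:ℝ) 1 → v ∈ Icc (0:ℝ) 1 → u < v →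
      1 < (2*μ)^k * (v - u) → h u ≤ h v := by
  obtain ⟨hr, hL, hR⟩ := hc
  intro k
  induction k with
  | zero =>
    intro u v hu hv huv hk
    rw [pow_zero, one_mul] at hk
    exfalso; have := hu.1; have := hv.2; linarith
  | succ k ih =>
    intro u v hu hv huv hk
    have hk' : ∀ a b : ℝ, a = 2*μ*u → b = 2*μ*v → 1 < (2*μ)^k * (b - a) := by
      intro a b ha hb; subst ha; subst hb
      rw [pow_succ] at hk; nlinarith
    by_cases hv2 : v ≤ 1/2
    · have hu2 : u ≤ 1/2 := le_trans huv.le hv2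
      rw [hL u hu.1 hu2, hL v hv.1 hv2]
      have hmem1 : 2*μ*u ∈ Icc (0:ℝ) 1 := ⟨by nlinarith [hu.1], by nlinarith⟩
      have hmem2 : 2*μ*v ∈ Icc (0:ℝ) 1 := ⟨by nlinarith [hv.1], by nlinarith⟩
      have := ih (2*μ*u) (2*μ*v) hmem1 hmem2 (by nlinarith) (hk' _ _ rfl rfl)
      linarith
    · push_neg at hv2
      by_cases hu2 : u ≤ 1/2
      · rw [hL u hu.1 hu2, hR v hv2 hv.2]
        have h1 := hr (2*μ*u) ⟨by nlinarith [hu.1], by nlinarith⟩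
        have h2 := hr (2*μ*(1-v)) ⟨by nlinarith [hv.2], by nlinarith [hv.2]⟩
        have := h1.2; have := h2.2; have := h1.1; have := h2.1
        linarith
      · push_neg at hu2
        rw [hR u hu2 hu.2, hR v hv2 hv.2]
        have hmem1 : 2*μ*(1-v) ∈ Icc (0:ℝ) 1 := ⟨by nlinarith [hv.2], by nlinarith⟩
        have hmem2 : 2*μ*(1-u) ∈ Icc (0:ℝ) 1 := ⟨by nlinarith [hu.2], by nlinarith⟩
        have hlt : 2*μ*(1-v) < 2*μ*(1-u) := by nlinarith
        have hbig : 1 < (2*μ)^k * (2*μ*(1-u) - 2*μ*(1-v)) := by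
          rw [pow_succ] at hk; nlinarith
        have := ih (2*μ*(1-v)) (2*μ*(1-u)) hmem1 hmem2 hlt hbig
        linarith

private lemma commuter_mono {μ : ℝ} (hμ1 : 1/2 < μ) (hμ2 : μ ≤ 1) {h : ℝ → ℝ}
    (hc : IsCommuter μ h) {u v : ℝ} (hu : u ∈ Icc (0:ℝ) 1) (hv : v ∈ Icc (0:ℝ) 1)
    (huv : u ≤ v) : h u ≤ h v := by
  rcases eq_or_lt_of_le huv with rfl | hlt
  · exact le_refl _
  · have h2μ : (1:ℝ) < 2*μ := by linarith
    obtain ⟨k, hk⟩ := pow_unbounded_of_one_lt (1/(v-u)) h2μ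
    refine commuter_mono_aux hμ1 hμ2 hc k u v hu hv hlt ?_
    rw [div_lt_iff₀ (by linarith)] at hk
    nlinarith [pow_pos (by linarith : (0:ℝ) < 2*μ) k]

private lemma finRotate_pow_apply (m k : ℕ) :
    ∀ i : Fin (m+1), (finRotate (m+1) ^ k) i = i + (k : Fin (m+1)) := by
  induction k with
  | zero => intro i; simp
  | succ k ih =>
    intro i
    rw [pow_succ, Equiv.Perm.mul_apply, finRotate_succ_apply, ih]
    push_cast
    abel

set_option maxHeartbeats 1000000

/-- For `1/2 < μ ≤ 1` and `n ≥ 3`: if `h_μ(μ) < 2(1 - 2^(n-2)/(2^(n-1)-1))`, then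
`T_μ` avoids the pattern `σ_n = (n-1) n 1 2 ⋯ (n-2)`. -/
theorem tentMap_avoids_sigma_of_commuter_bound (μ : ℝ) (hμ1 : 1/2 < μ) (hμ2 : μ ≤ 1)
    (n : ℕ) (hn : 3 ≤ n) (h : ℝ → ℝ) (hc : IsCommuter μ h)
    (hb : h μ < 2 * (1 - (2:ℝ)^(n-2)/((2:ℝ)^(n-1)-1))) :
    ¬ Allows (tentMap μ) (sigmaPerm n) := by
  intro hAll
  obtain ⟨x, hx, hA⟩ := hAll
  obtain ⟨hr, hL, hR⟩ := hc
  have hμ0 : (0:ℝ) < μ := by linarith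
  set T := tentMap μ with hT
  set X : ℕ → ℝ := fun i => T^[i] x with hXdef
  have hXs : ∀ i, X (i+1) = T (X i) := fun i => Function.iterate_succ_apply' T i x
  have hX : ∀ i, X i ∈ Icc (0:ℝ) 1 := by
    intro i
    induction i with
    | zero => exact hx
    | succ i ih =>
      rw [hXs i]
      have := tentMap_mem hμ0 ih
      exact ⟨this.1, le_trans this.2 hμ2⟩
  have hXle : ∀ i, X (i+1) ≤ μ := by
    intro i; rw [hXs i]; exact (tentMap_mem hμ0 (hX i)).2
  -- the permutation
  haveI : NeZero n := ⟨by omega⟩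
  have hσ : ∀ i : Fin n, sigmaPerm n i = i + ((n-2 : ℕ) : Fin n) := by
    obtain ⟨m, rfl⟩ : ∃ m, n = m + 1 := ⟨n-1, by omega⟩
    intro i
    exact finRotate_pow_apply m (m+1-2) i
  have key : ∀ a b : ℕ, a < n → b < n → (a + (n-2)) % n < (b + (n-2)) % n → X a < X b := by
    intro a b ha hb hab
    refine (hA ⟨a, ha⟩ ⟨b, hb⟩).mp ?_
    rw [hσ, hσ, Fin.lt_def, Fin.val_add, Fin.val_add, Fin.val_natCast]
    have h2n : (n-2) % n = n-2 := Nat.mod_eq_of_lt (by omega)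
    rw [h2n]
    exact hab
  have hmod₁ : ∀ a : ℕ, a < 2 → (a + (n-2)) % n = a + (n-2) := by
    intro a ha; exact Nat.mod_eq_of_lt (by omega)
  have hmod₂ : ∀ a : ℕ, 2 ≤ a → a < n → (a + (n-2)) % n = a - 2 := by
    intro a h2 ha
    have e : a + (n-2) = n + (a-2) := by omega
    rw [e, Nat.add_mod_left]
    exact Nat.mod_eq_of_lt (by omega)
  -- order facts
  have o21 : X 2 < X 1 := key 2 1 (by omega) (by omega)
    (by rw [hmod₂ 2 (by omega) (by omega), hmod₁ 1 (by omega)]; omega)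
  have ochain : ∀ i, 2 ≤ i → i ≤ n-2 → X i < X (i+1) := by
    intro i h2 hle
    exact key i (i+1) (by omega) (by omega)
      (by rw [hmod₂ i h2 (by omega), hmod₂ (i+1) (by omega) (by omega)]; omega)
  have oc : X (n-1) < X 0 := key (n-1) 0 (by omega) (by omega)
    (by rw [hmod₂ (n-1) (by omega) (by omega), hmod₁ 0 (by omega)]; omega)
  have od : X 0 < X 1 := key 0 1 (by omega) (by omega)
    (by rw [hmod₁ 0 (by omega), hmod₁ 1 (by omega)]; omega)
  have oe : X (n-1) < X 1 := key (n-1) 1 (by omega) (by omega)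
    (by rw [hmod₂ (n-1) (by omega) (by omega), hmod₁ 1 (by omega)]; omega)
  -- tent map branch evaluations
  have hTle : ∀ y : ℝ, y ≤ 1/2 → T y = 2*μ*y := fun y hy => if_pos hy
  have hTgt : ∀ y : ℝ, 1/2 < y → T y = 2*μ*(1-y) := fun y hy => if_neg (not_le.mpr hy)
  -- x₁ > 1/2
  have hx1 : 1/2 < X 1 := by
    by_contra hle
    push_neg at hle
    have e : X 2 = 2*μ*(X 1) := by rw [hXs 1, hTle _ hle]
    nlinarith [(hX 2).1, o21]
  -- middle points are ≤ 1/2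
  have hsmall : ∀ i, 2 ≤ i → i ≤ n-2 → X i ≤ 1/2 := by
    intro i h2 hle
    by_contra hgt
    push_neg at hgt
    have hXi1 : X (i+1) = 2*μ*(1 - X i) := by rw [hXs i, hTgt _ hgt]
    have hinc : X i < X (i+1) := ochain i h2 hle
    have hgt1 : 1/2 < X (i+1) := lt_trans hgt hinc
    by_cases hcase : i + 1 ≤ n - 2
    · have hXi2 : X (i+2) = 2*μ*(1 - X (i+1)) := by rw [hXs (i+1), hTgt _ hgt1]
      have hinc2 : X (i+1) < X (i+2) := ochain (i+1) (by omega) hcase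
      nlinarith
    · have hi1 : i + 1 = n - 1 := by omega
      rw [hi1] at hXi1 hgt1
      have hx0gt : 1/2 < X 0 := lt_trans hgt1 oc
      have hX1e : X 1 = 2*μ*(1 - X 0) := by rw [hXs 0, hTgt _ hx0gt]
      -- X 1 < 2μ(1 - X(n-1)) < 2μ(1 - X i) = X (n-1), contradicting oe
      have hi' : X i < X (n-1) := by rw [← hi1]; exact hinc
      nlinarith
  -- telescoping h along the orbit
  have htel : ∀ j, 2 ≤ j → j ≤ n-1 → h (X 2) = (1/2)^(j-2) * h (X j) := by
    intro j h2 hle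
    induction j, h2 using Nat.le_induction with
    | base => simp
    | succ j hj ih =>
      have hjle : j ≤ n-2 := by omega
      have hstep : h (X j) = (1/2) * h (X (j+1)) := by
        rw [hL (X j) (hX j).1 (hsmall j hj hjle), ← hTle (X j) (hsmall j hj hjle), ← hXs j]
      rw [ih (by omega), hstep]
      have e : j + 1 - 2 = (j - 2) + 1 := by omega
      rw [e, pow_succ]
      ring
  have hmain : h (X 1) = 1 - (1/2)^(n-2) * h (X (n-1)) := by
    have e1 : h (X 1) = 1 - (1/2) * h (X 2) := by
      rw [hR (X 1) hx1 (hX 1).2, ← hTgt (X 1) hx1, ← hXs 1]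
    rw [e1, htel (n-1) (by omega) le_rfl]
    have e : n - 2 = (n - 1 - 2) + 1 := by omega
    rw [e, pow_succ]
    ring
  -- abbreviations
  set a := h (X (n-1)) with hadef
  set P := (2:ℝ)^(n-2) with hPdef
  have hP1 : (2:ℝ) ≤ P := by
    rw [hPdef]
    calc (2:ℝ) = 2^1 := (pow_one 2).symm
    _ ≤ 2^(n-2) := pow_le_pow_right₀ (by norm_num) (by omega)
  have hP0 : (0:ℝ) < P := by linarith
  have hPn1 : (2:ℝ)^(n-1) = 2*P := by
    rw [hPdef, ← pow_succ']
    congr 1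
    omega
  have hhalfpow : ((1:ℝ)/2)^(n-2) = 1/P := by
    rw [hPdef, one_div_pow]
  have ha01 : a ∈ Icc (0:ℝ) 1 := hr _ (hX (n-1))
  have hX1mem := hX 1
  have hb1 : h (X 1) ∈ Icc (0:ℝ) 1 := hr _ hX1mem
  -- upper bound on a
  have haP : a ≤ P/(2*P-1) := by
    by_cases hx0 : X 0 ≤ 1/2
    · have e0 : h (X 0) = (1/2) * h (X 1) := by
        rw [hL (X 0) (hX 0).1 hx0, ← hTle (X 0) hx0, ← hXs 0]
      have hle0 : a ≤ h (X 0) :=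
        commuter_mono hμ1 hμ2 ⟨hr, hL, hR⟩ (hX (n-1)) (hX 0) oc.le
      have : a ≤ 1/2 := by rw [e0] at hle0; linarith [hb1.2]
      rw [le_div_iff₀ (by linarith)]
      nlinarith
    · push_neg at hx0
      have e0 : h (X 0) = 1 - (1/2) * h (X 1) := by
        rw [hR (X 0) hx0 (hX 0).2, ← hTgt (X 0) hx0, ← hXs 0]
      have hle0 : a ≤ h (X 0) :=
        commuter_mono hμ1 hμ2 ⟨hr, hL, hR⟩ (hX (n-1)) (hX 0) oc.le
      rw [e0, hmain, hhalfpow] at hle0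
      -- a ≤ 1 - 1/2 (1 - a/P) = 1/2 + a/(2P)
      rw [le_div_iff₀ (by linarith)]
      have : a ≤ 1/2 + a/(2*P) := by
        have : (1:ℝ) - 1/2 * (1 - 1/P * a) = 1/2 + a/(2*P) := by
          field_simp; ring
        linarith [hle0.trans_eq this]
      have h2P : (0:ℝ) < 2*P := by linarith
      have e3 : a / (2*P) * (2*P) = a := div_mul_cancel₀ a (by linarith)
      nlinarith [mul_le_mul_of_nonneg_right this h2P.le, e3]
    -- final contradiction
  have hμmem : μ ∈ Icc (0:ℝ) 1 := ⟨by linarith, hμ2⟩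
  have hx1μ : X 1 ≤ μ := hXle 0
  have hmono1 : h (X 1) ≤ h μ :=
    commuter_mono hμ1 hμ2 ⟨hr, hL, hR⟩ hX1mem hμmem hx1μ
  have hbound : 2 * (1 - (2:ℝ)^(n-2)/((2:ℝ)^(n-1)-1)) ≤ h (X 1) := by
    rw [hmain, hhalfpow, hPn1]
    have hd : (0:ℝ) < 2*P - 1 := by linarith
    rw [le_div_iff₀ hd] at haP
    have e1 : 2*(1 - P/(2*P-1)) = (2*P-2)/(2*P-1) := by field_simp; ring
    have e2 : 1 - 1/P*a = (P - a)/P := by field_simp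
    rw [e1, e2, div_le_div_iff₀ hd hP0]
    have e3 : (2*P-2)*P = P*(2*P-1) - P := by ring
    have e4 : (P-a)*(2*P-1) = P*(2*P-1) - a*(2*P-1) := by ring
    linarith
  linarith
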